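/- For every n ≥ 1, the identity Σ_{T∈𝒫_n} x_1^{oleaf(T)} x_2^{yleaf(T)} y_1^{oint(T)} y_2^{yint(T)} = M_{n−1}(x_1 y_1, x_2 + y_2) holds in ℤ[x_1, x_2, y_1, y_2], where M_m(u,v) = Σ_{k=0}^{⌊m/2⌋} binom(m, 2k) · C_k · u^{k+1} v^{m−2k} and C_k = binom(2k,k)/(k+1) is the k-th Catalan number. -/

import Mathlib

/-- Labeled plane trees: a node with a label in `ℕ` and a (left-to-right ordered)
list of children. -/
inductive LTree : Type where
  | node : ℕ → List LTree → LTree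

namespace LTree

/-- The label of the root. -/
def label : LTree → ℕ
  | node a _ => a

/-- The list of children of the root, from left to right. -/
def children : LTree → List LTree
  | node _ cs => cs

/-- A tree consisting of a single node is a leaf. -/
def isLeaf (t : LTree) : Bool := t.children.isEmpty

/-- The list of all subtrees (i.e. all nodes) of a tree. -/
def subtrees : LTree → List LTree
  | node a cs => node a cs :: (cs.attach.map (fun c => subtrees c.1)).flatten
decreasing_by
  simp only [LTree.node.sizeOf_spec]
  have := List.sizeOf_lt_of_mem c.2
  omega

/-- The multiset of labels of all nodes of a tree. -/
def labels (T : LTree) : Multiset ℕ := (T.subtrees.map label : List ℕ)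

/-- `T` is a weakly increasing tree on the multiset `M`: the root is labeled `0`,
the multiset of labels is `M ∪ {0}`, labels weakly increase along root-to-leaf paths,
and the labels of the children of each node weakly increase from right to left. -/
def IsWIT (M : Multiset ℕ) (T : LTree) : Prop :=
  T.label = 0 ∧ T.labels = 0 ::ₘ M ∧
  ∀ t ∈ T.subtrees, (∀ c ∈ t.children, t.label ≤ c.label) ∧
    List.Chain' (fun a b => b ≤ a) (t.children.map label)

/-- `T` is (an encoding of) a plane tree with `n` edges: all labels are zero
and there are `n + 1` nodes. -/
def IsPlane (n : ℕ) (T : LTree) : Prop :=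
  (∀ t ∈ T.subtrees, t.label = 0) ∧ T.subtrees.length = n + 1

/-- The number of singleton leaves: leaves that are the only child of their parent. -/
def sleaf (T : LTree) : ℕ :=
  T.subtrees.countP (fun t => match t.children with
    | [c] => c.isLeaf
    | _ => false)

/-- The number of elder leaves: leaves that are the leftmost child of their parent
and have siblings. -/
def eleaf (T : LTree) : ℕ :=
  T.subtrees.countP (fun t => match t.children with
    | c :: _ :: _ => c.isLeaf
    | _ => false)

/-- The number of young leaves: leaves that are not the leftmost child of their parent. -/
def yleaf (T : LTree) : ℕ :=
  (T.subtrees.map (fun t => t.children.tail.countP isLeaf)).sum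

/-- The number of young internal nodes: internal nodes whose leftmost child is internal. -/
def yint (T : LTree) : ℕ :=
  T.subtrees.countP (fun t => match t.children with
    | c :: _ => !c.isLeaf
    | _ => false)

/-- The number of singleton internal nodes: parents of a singleton leaf. -/
def sint (T : LTree) : ℕ :=
  T.subtrees.countP (fun t => match t.children with
    | [c] => c.isLeaf
    | _ => false)

/-- The number of elder internal nodes: parents of an elder leaf. -/
def eint (T : LTree) : ℕ :=
  T.subtrees.countP (fun t => match t.children with
    | c :: _ :: _ => c.isLeaf
    | _ => false)

/-- The number of old leaves: leaves that are the leftmost child of their parent. -/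
def oleaf (T : LTree) : ℕ := sleaf T + eleaf T

/-- The number of old internal nodes. -/
def oint (T : LTree) : ℕ := sint T + eint T

end LTree


open Finset

lemma hockey (m s : ℕ) : ∑ j ∈ range (m+1), j.choose s = (m+1).choose (s+1) := by
  induction m with
  | zero =>
    rcases s with _ | s <;> simp [Nat.choose_eq_zero_of_lt]
  | succ m ih =>
    rw [Finset.sum_range_succ, ih, Nat.choose_succ_succ (m+1) s]
    simp [Nat.succ_eq_add_one]
    omega

lemma vh (m : ℕ) : ∀ r s : ℕ,
    ∑ i ∈ range (m+1), (Nat.choose i r) * (Nat.choose (m - i) s)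
      = Nat.choose (m+1) (r+s+1) := by
  induction m with
  | zero =>
    intro r s
    rcases r with _ | r <;> rcases s with _ | s <;>
      simp [Nat.choose_eq_zero_of_lt, show ∀ t:ℕ, 1 < t+1+1 by omega,
        show ∀ t u:ℕ, 1 < t+1+(u+1)+1 by omega]
  | succ m ih =>
    intro r s
    rcases r with _ | r
    · simp only [Nat.choose_zero_right, one_mul]
      have := Finset.sum_range_reflect (fun j => j.choose s) (m+2)
      simp only [show ∀ j, m + 2 - 1 - j = m + 1 - j from fun j => by omega] at this
      rw [this, hockey]
      congr 1
      omega
    · rw [Finset.sum_range_succ']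
      simp only [Nat.choose_succ_succ, Nat.choose_zero_succ, Nat.succ_sub_succ,
        zero_mul, add_zero, add_mul]
      rw [Finset.sum_add_distrib, ih r s, ih (r+1) s]
      simp [Nat.succ_eq_add_one, show r+1+s = r+s+1 by omega, show r+1+s+1 = r+s+2 by omega,
        Nat.choose_succ_succ]

lemma catalan_conv (s : ℕ) :
    ∑ a ∈ range (s+1), catalan a * catalan (s - a) = catalan (s+1) := by
  rw [catalan_succ']
  rw [Finset.Nat.sum_antidiagonal_eq_sum_range_succ_mk]

lemma sum_square_eq_sum_diag {M : Type*} [AddCommMonoid M] (N : ℕ) (F : ℕ → ℕ → M)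
    (h : ∀ a b, N ≤ a + b → F a b = 0) :
    ∑ a ∈ range N, ∑ b ∈ range N, F a b
      = ∑ s ∈ range N, ∑ a ∈ range (s+1), F a (s - a) := by
  rw [← Finset.sum_product']
  have hT : (range N).biUnion (fun s => Finset.HasAntidiagonal.antidiagonal s)
      = (range N ×ˢ range N).filter (fun p => p.1 + p.2 < N) := by
    ext p
    simp only [Finset.mem_biUnion, Finset.HasAntidiagonal.mem_antidiagonal, Finset.mem_filter,
      Finset.mem_product, Finset.mem_range]
    constructor
    · rintro ⟨s, hs, rfl⟩
      omega
    · intro hlt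
      exact ⟨p.1 + p.2, by omega, rfl⟩
  have h1 : ∑ p ∈ (range N ×ˢ range N), F p.1 p.2
      = ∑ p ∈ (range N ×ˢ range N).filter (fun p => p.1 + p.2 < N), F p.1 p.2 := by
    rw [Finset.sum_filter_of_ne]
    intro p _ hne
    by_contra hlt
    exact hne (h p.1 p.2 (by omega))
  rw [h1, ← hT, Finset.sum_biUnion]
  · refine Finset.sum_congr rfl fun s _ => ?_
    exact (Finset.Nat.sum_antidiagonal_eq_sum_range_succ_mk _ s)
  · intro x _ y _ hxy
    simp only [Finset.disjoint_left, Finset.HasAntidiagonal.mem_antidiagonal]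
    intro a ha hb
    exact hxy (by omega)

open MvPolynomial

noncomputable abbrev uu : MvPolynomial (Fin 4) ℤ := X 0 * X 2
noncomputable abbrev vv : MvPolynomial (Fin 4) ℤ := X 1 + X 3

noncomputable def MM (m : ℕ) : MvPolynomial (Fin 4) ℤ :=
  ∑ k ∈ range (m+1), ((m.choose (2*k) * catalan k : ℕ) : MvPolynomial (Fin 4) ℤ)
    * uu^k * vv^(m - 2*k)

lemma MM_zero : MM 0 = 1 := by simp [MM]

lemma hB (p : ℕ) : uu * ∑ m ∈ range (p+1), MM m * MM (p - m)
    = ∑ k ∈ range (p+2),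
        ((Nat.choose (p+1) (2*k+1) * catalan (k+1) : ℕ) : MvPolynomial (Fin 4) ℤ)
          * uu^(k+1) * vv^(p-2*k) := by
  have e1 : ∀ m ∈ range (p+1), MM m * MM (p - m)
      = ∑ a ∈ range (p+1), ∑ b ∈ range (p+1),
          ((Nat.choose m (2*a) * Nat.choose (p-m) (2*b) * (catalan a * catalan b) : ℕ) :
              MvPolynomial (Fin 4) ℤ)
            * uu^(a+b) * vv^(p-2*(a+b)) := by
    intro m hm
    rw [Finset.mem_range] at hm
    unfold MM
    rw [Finset.sum_mul_sum]
    rw [Finset.sum_subset (Finset.range_subset_range.mpr (show m+1 ≤ p+1 by omega))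
      (fun a _ ha => ?_)]
    · refine Finset.sum_congr rfl fun a _ => ?_
      rw [Finset.sum_subset (Finset.range_subset_range.mpr (show p-m+1 ≤ p+1 by omega))
        (fun b _ hb => ?_)]
      · refine Finset.sum_congr rfl fun b _ => ?_
        rcases le_or_gt (2*a) m with h2a | h2a
        · rcases le_or_gt (2*b) (p-m) with h2b | h2b
          · have hexp : m - 2*a + (p - m - 2*b) = p - 2*(a+b) := by omega
            rw [show (p:ℕ) - 2*(a+b) = m - 2*a + (p - m - 2*b) from hexp.symm, pow_add]
            push_cast
            ring
          · rw [Nat.choose_eq_zero_of_lt (show p-m < 2*b by omega)]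
            push_cast
            ring
        · rw [Nat.choose_eq_zero_of_lt (show m < 2*a by omega)]
          push_cast
          ring
      · rw [Finset.mem_range, not_lt] at hb
        rw [Nat.choose_eq_zero_of_lt (show p-m < 2*b by omega)]
        push_cast
        ring
    · rw [Finset.mem_range, not_lt] at ha
      rw [Nat.choose_eq_zero_of_lt (show m < 2*a by omega)]
      push_cast
      simp
  rw [Finset.sum_congr rfl e1, Finset.sum_comm]
  have e2 : ∀ a ∈ range (p+1),
      (∑ m ∈ range (p+1), ∑ b ∈ range (p+1),
          ((Nat.choose m (2*a) * Nat.choose (p-m) (2*b) * (catalan a * catalan b) : ℕ) :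
              MvPolynomial (Fin 4) ℤ) * uu^(a+b) * vv^(p-2*(a+b)))
        = ∑ b ∈ range (p+1),
            ((Nat.choose (p+1) (2*a+2*b+1) * (catalan a * catalan b) : ℕ) :
                MvPolynomial (Fin 4) ℤ) * uu^(a+b) * vv^(p-2*(a+b)) := by
    intro a _
    rw [Finset.sum_comm]
    refine Finset.sum_congr rfl fun b _ => ?_
    rw [← Finset.sum_mul, ← Finset.sum_mul, ← Nat.cast_sum]
    rw [show (∑ m ∈ range (p+1), Nat.choose m (2*a) * Nat.choose (p-m) (2*b) * (catalan a * catalan b))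
        = (∑ m ∈ range (p+1), Nat.choose m (2*a) * Nat.choose (p-m) (2*b)) * (catalan a * catalan b) from
      (Finset.sum_mul _ _ _).symm, vh p (2*a) (2*b)]
  rw [Finset.sum_congr rfl e2]
  -- now a square sum over (a, b); convert to diagonal
  rw [sum_square_eq_sum_diag (p+1)
    (fun a b => ((Nat.choose (p+1) (2*a+2*b+1) * (catalan a * catalan b) : ℕ) :
        MvPolynomial (Fin 4) ℤ) * uu^(a+b) * vv^(p-2*(a+b)))
    (fun a b hab => by
      have hz := Nat.choose_eq_zero_of_lt (show p+1 < 2*a+2*b+1 by omega)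
      simp [hz])]
  rw [Finset.mul_sum]
  rw [Finset.sum_range_succ (n := p+1)]
  rw [Nat.choose_eq_zero_of_lt (show p+1 < 2*(p+1)+1 by omega)]
  simp only [zero_mul, Nat.cast_zero, mul_zero, add_zero]
  refine Finset.sum_congr rfl fun s hs => ?_
  rw [Finset.mem_range] at hs
  have hconv : ∀ a ∈ range (s+1),
      ((Nat.choose (p+1) (2*a+2*(s-a)+1) * (catalan a * catalan (s-a)) : ℕ) :
          MvPolynomial (Fin 4) ℤ) * uu^(a+(s-a)) * vv^(p-2*(a+(s-a)))
        = ((Nat.choose (p+1) (2*s+1) * (catalan a * catalan (s-a)) : ℕ) :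
            MvPolynomial (Fin 4) ℤ) * uu^s * vv^(p-2*s) := by
    intro a ha
    rw [Finset.mem_range] at ha
    rw [show 2*a+2*(s-a)+1 = 2*s+1 by omega, show a+(s-a) = s by omega]
  rw [Finset.sum_congr rfl hconv, ← Finset.sum_mul, ← Finset.sum_mul, ← Nat.cast_sum]
  rw [show (∑ a ∈ range (s+1), Nat.choose (p+1) (2*s+1) * (catalan a * catalan (s-a)))
      = Nat.choose (p+1) (2*s+1) * ∑ a ∈ range (s+1), catalan a * catalan (s-a) from
    (Finset.mul_sum _ _ _).symm, catalan_conv s]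
  push_cast
  ring

lemma Mrec (p : ℕ) : MM (p+2) = vv * MM (p+1) + uu * ∑ m ∈ range (p+1), MM m * MM (p - m) := by
  have hA : vv * MM (p+1) = ∑ k ∈ range (p+3),
      ((Nat.choose (p+1) (2*k) * catalan k : ℕ) : MvPolynomial (Fin 4) ℤ)
        * uu^k * vv^(p+2-2*k) := by
    unfold MM
    rw [Finset.mul_sum, Finset.sum_range_succ (n := p+2)]
    rw [Nat.choose_eq_zero_of_lt (show p+1 < 2*(p+2) by omega)]
    simp only [zero_mul, Nat.cast_zero, mul_zero, add_zero]
    refine Finset.sum_congr rfl fun k hk => ?_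
    rcases le_or_gt (2*k) (p+1) with h2 | h2
    · rw [show p+2-2*k = (p+1-2*k)+1 by omega, pow_succ]
      ring
    · rw [Nat.choose_eq_zero_of_lt h2]
      simp
  rw [hA, hB p]
  unfold MM
  rw [Finset.sum_range_succ' (n := p+2), Finset.sum_range_succ'
    (f := fun k => ((Nat.choose (p+1) (2*k) * catalan k : ℕ) : MvPolynomial (Fin 4) ℤ)
      * uu^k * vv^(p+2-2*k)) (n := p+2)]
  have key : ∑ k ∈ range (p+2),
      ((Nat.choose (p+2) (2*(k+1)) * catalan (k+1) : ℕ) : MvPolynomial (Fin 4) ℤ)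
        * uu^(k+1) * vv^(p+2-2*(k+1))
      = ∑ k ∈ range (p+2),
        (((Nat.choose (p+1) (2*(k+1)) * catalan (k+1) : ℕ) : MvPolynomial (Fin 4) ℤ)
            * uu^(k+1) * vv^(p+2-2*(k+1))
          + ((Nat.choose (p+1) (2*k+1) * catalan (k+1) : ℕ) : MvPolynomial (Fin 4) ℤ)
            * uu^(k+1) * vv^(p-2*k)) := by
    refine Finset.sum_congr rfl fun k _ => ?_
    rw [show p+2-2*(k+1) = p-2*k by omega, show 2*(k+1) = (2*k+1)+1 by omega,
      Nat.choose_succ_succ (p+1) (2*k+1)]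
    push_cast
    ring
  rw [key, Finset.sum_add_distrib]
  simp
  ring

namespace LTree
noncomputable instance : DecidableEq LTree := Classical.decEq _

lemma subtrees_node (a : ℕ) (cs : List LTree) :
    (node a cs).subtrees = node a cs :: (cs.map subtrees).flatten := by
  rw [subtrees]
  simp [List.attach_map_val]

lemma countP_flatten {α : Type*} (l : List (List α)) (p : α → Bool) :
    (l.flatten).countP p = (l.map (fun x => List.countP p x)).sum := by
  induction l with
  | nil => simp
  | cons h t ih => simp [List.countP_append, ih]

lemma sum_map_add {α : Type*} (l : List α) (f g : α → ℕ) :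
    (l.map f).sum + (l.map g).sum = (l.map (fun x => f x + g x)).sum := by
  induction l with
  | nil => simp
  | cons h t ih => simp [← ih]; omega

lemma countP_subtrees (p : LTree → Bool) (a : ℕ) (cs : List LTree) :
    (node a cs).subtrees.countP p
      = (if p (node a cs) then 1 else 0) + (cs.map (fun c => c.subtrees.countP p)).sum := by
  rw [subtrees_node, List.countP_cons, countP_flatten, List.map_map]
  simp only [Function.comp_def]; omega

def nodes (T : LTree) : ℕ := T.subtrees.length

lemma nodes_node (a : ℕ) (cs : List LTree) :
    nodes (node a cs) = 1 + (cs.map nodes).sum := by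
  simp only [nodes, subtrees_node, List.length_cons, List.length_flatten, List.map_map]
  simp only [Function.comp_def]
  show (List.map nodes cs).sum + 1 = _
  omega

lemma one_le_nodes (T : LTree) : 1 ≤ nodes T := by
  cases T with | node a cs => rw [nodes_node]; omega

lemma mem_subtrees_node {t : LTree} (a : ℕ) (cs : List LTree) :
    t ∈ (node a cs).subtrees ↔ t = node a cs ∨ ∃ c ∈ cs, t ∈ c.subtrees := by
  simp only [subtrees_node, List.mem_cons, List.mem_flatten, List.mem_map]
  constructor
  · rintro (h | ⟨l, ⟨c, hc, rfl⟩, h⟩)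
    · exact Or.inl h
    · exact Or.inr ⟨c, hc, h⟩
  · rintro (h | ⟨c, hc, h⟩)
    · exact Or.inl h
    · exact Or.inr ⟨c.subtrees, ⟨c, hc, rfl⟩, h⟩

end LTree

namespace LTree

lemma sint_eq_sleaf (T : LTree) : sint T = sleaf T := rfl
lemma eint_eq_eleaf (T : LTree) : eint T = eleaf T := rfl
lemma oint_eq_oleaf (T : LTree) : oint T = oleaf T := rfl

/-- head child is a leaf -/
def ohead (t : LTree) : Bool := match t.children with | c :: _ => c.isLeaf | _ => false
/-- head child is internal -/
def yhead (t : LTree) : Bool := match t.children with | c :: _ => !c.isLeaf | _ => false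

lemma oleaf_node (a : ℕ) (cs : List LTree) :
    oleaf (node a cs) = (if ohead (node a cs) then 1 else 0) + (cs.map oleaf).sum := by
  unfold oleaf sleaf eleaf
  rw [countP_subtrees, countP_subtrees, ← sum_map_add]
  rcases cs with _ | ⟨c, _ | ⟨d, t⟩⟩ <;> simp [ohead, children] <;> by_cases hc : c.isLeaf <;> simp [hc] <;> omega

end LTree

namespace LTree
open MvPolynomial

lemma sum_map_subtrees (f : LTree → ℕ) (a : ℕ) (cs : List LTree) :
    ((node a cs).subtrees.map f).sum
      = f (node a cs) + (cs.map (fun c => (c.subtrees.map f).sum)).sum := by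
  rw [subtrees_node]
  simp [List.map_flatten, List.sum_flatten, List.map_map, Function.comp_def]

lemma yleaf_node (a : ℕ) (cs : List LTree) :
    yleaf (node a cs) = cs.tail.countP isLeaf + (cs.map yleaf).sum := by
  unfold yleaf
  rw [sum_map_subtrees]
  rfl

lemma yint_node (a : ℕ) (cs : List LTree) :
    yint (node a cs) = (if yhead (node a cs) then 1 else 0) + (cs.map yint).sum := by
  unfold yint
  rw [countP_subtrees]
  rfl

lemma isLeaf_node (a : ℕ) (cs : List LTree) : isLeaf (node a cs) = true ↔ cs = [] := by
  simp [isLeaf, children]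

lemma eq_of_isLeaf {c : LTree} (h : isLeaf c = true) : ∃ b, c = node b [] := by
  cases c with | node b ds => exact ⟨b, by rw [(isLeaf_node b ds).mp h]⟩

lemma oleaf_leaf (a : ℕ) : oleaf (node a []) = 0 := by simp [oleaf_node, ohead, children]
lemma yleaf_leaf (a : ℕ) : yleaf (node a []) = 0 := by simp [yleaf_node]
lemma yint_leaf (a : ℕ) : yint (node a []) = 0 := by simp [yint_node, yhead, children]

noncomputable def wt (T : LTree) : MvPolynomial (Fin 4) ℤ :=
  X 0 ^ oleaf T * X 1 ^ yleaf T * X 2 ^ oint T * X 3 ^ yint T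

lemma wt_leaf (a : ℕ) : wt (node a []) = 1 := by
  simp [wt, oint_eq_oleaf, oleaf_leaf, yleaf_leaf, yint_leaf]

def addLast : LTree → LTree → LTree | node a cs, c => node a (cs ++ [c])

lemma wt_addLast_nil (a : ℕ) (c : LTree) :
    wt (addLast (node a []) c) = (if c.isLeaf then X 0 * X 2 else X 3) * wt c := by
  show wt (node a [c]) = _
  by_cases hc : c.isLeaf
  · obtain ⟨b, rfl⟩ := eq_of_isLeaf hc
    simp [wt, oint_eq_oleaf, oleaf_node, yleaf_node, yint_node, ohead, yhead, children,
      oleaf_leaf, yleaf_leaf, yint_leaf, isLeaf_node, wt_leaf]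
  · simp [wt, oint_eq_oleaf, oleaf_node, yleaf_node, yint_node, ohead, yhead, children, hc,
      pow_add]
    ring

lemma ohead_cons (a : ℕ) (d : LTree) (t : List LTree) : ohead (node a (d :: t)) = d.isLeaf := rfl
lemma yhead_cons (a : ℕ) (d : LTree) (t : List LTree) : yhead (node a (d :: t)) = !d.isLeaf := rfl

lemma oleaf_cons_append (a : ℕ) (d : LTree) (t : List LTree) (c : LTree) :
    oleaf (node a (d :: (t ++ [c]))) = oleaf (node a (d :: t)) + oleaf c := by
  rw [oleaf_node, oleaf_node, ohead_cons, ohead_cons]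
  simp
  omega

lemma yint_cons_append (a : ℕ) (d : LTree) (t : List LTree) (c : LTree) :
    yint (node a (d :: (t ++ [c]))) = yint (node a (d :: t)) + yint c := by
  rw [yint_node, yint_node, yhead_cons, yhead_cons]
  simp
  omega

lemma yleaf_cons_append (a : ℕ) (d : LTree) (t : List LTree) (c : LTree) :
    yleaf (node a (d :: (t ++ [c])))
      = yleaf (node a (d :: t)) + yleaf c + (if c.isLeaf then 1 else 0) := by
  rw [yleaf_node, yleaf_node]
  simp [List.countP_append, List.countP_cons]
  omega

lemma wt_addLast_cons (a : ℕ) (d : LTree) (t : List LTree) (c : LTree) :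
    wt (addLast (node a (d :: t)) c)
      = wt (node a (d :: t)) * (if c.isLeaf then X 1 else wt c) := by
  show wt (node a (d :: (t ++ [c]))) = _
  unfold wt
  rw [oint_eq_oleaf, oint_eq_oleaf, oleaf_cons_append, yint_cons_append, yleaf_cons_append]
  by_cases hc : c.isLeaf
  · obtain ⟨b, rfl⟩ := eq_of_isLeaf hc
    simp [oleaf_leaf, yleaf_leaf, yint_leaf, oint_eq_oleaf, isLeaf_node, pow_add]
    ring
  · simp [hc, pow_add, oint_eq_oleaf]
    ring

end LTree

namespace LTree

noncomputable def PT : ℕ → Finset LTree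
  | 0 => {node 0 []}
  | (n+1) => (Finset.range (n+1)).attach.biUnion fun m =>
      ((PT m.1) ×ˢ (PT (n - m.1))).image fun p => addLast p.1 p.2
decreasing_by
  · have := Finset.mem_range.mp m.2; omega
  · omega

lemma nodes_eq (T : LTree) (n : ℕ) (h : IsPlane n T) : nodes T = n + 1 := h.2

lemma isPlane_zero (T : LTree) : IsPlane 0 T ↔ T = node 0 [] := by
  constructor
  · rintro ⟨hl, hn⟩
    cases T with | node a cs =>
    have hno : nodes (node a cs) = 1 := hn
    rw [nodes_node] at hno
    have hcs : cs = [] := by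
      cases cs with
      | nil => rfl
      | cons d t =>
        exfalso
        have := one_le_nodes d
        simp at hno
        omega
    subst hcs
    have : label (node a []) = 0 := hl _ (by rw [mem_subtrees_node]; left; rfl)
    simp [label] at this
    subst this
    rfl
  · rintro rfl
    constructor
    · intro t ht
      rw [mem_subtrees_node] at ht
      rcases ht with rfl | ⟨c, hc, _⟩
      · rfl
      · simp at hc
    · simp [subtrees_node]

lemma labels_zero_node (a : ℕ) (cs : List LTree) :
    (∀ t ∈ (node a cs).subtrees, label t = 0)
      ↔ (a = 0 ∧ ∀ c ∈ cs, ∀ t ∈ c.subtrees, label t = 0) := by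
  constructor
  · intro h
    have hroot : label (node a cs) = 0 := h _ (by rw [mem_subtrees_node]; left; rfl)
    refine ⟨hroot, fun c hc t ht => ?_⟩
    exact h t (by rw [mem_subtrees_node]; right; exact ⟨c, hc, ht⟩)
  · rintro ⟨rfl, h⟩ t ht
    rw [mem_subtrees_node] at ht
    rcases ht with rfl | ⟨c, hc, ht⟩
    · rfl
    · exact h c hc t ht

lemma nodes_addLast (a : ℕ) (cs : List LTree) (c : LTree) :
    nodes (node a (cs ++ [c])) = nodes (node a cs) + nodes c := by
  rw [nodes_node, nodes_node, List.map_append]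
  simp
  omega

lemma isPlane_addLast {m j : ℕ} {T' c : LTree} (h1 : IsPlane m T') (h2 : IsPlane j c) :
    IsPlane (m + j + 1) (addLast T' c) := by
  cases T' with | node a cs =>
  obtain ⟨hl1, hn1⟩ := h1
  rw [labels_zero_node] at hl1
  refine ⟨?_, ?_⟩
  · show ∀ t ∈ (node a (cs ++ [c])).subtrees, label t = 0
    rw [labels_zero_node]
    refine ⟨hl1.1, fun d hd => ?_⟩
    rw [List.mem_append] at hd
    rcases hd with hd | hd
    · exact hl1.2 d hd
    · simp at hd
      subst hd
      exact h2.1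
  · show nodes (node a (cs ++ [c])) = _
    rw [nodes_addLast]
    have hx : nodes (node a cs) = m + 1 := hn1
    have hy : nodes c = j + 1 := h2.2
    omega

lemma isPlane_decomp {n : ℕ} {T : LTree} (h : IsPlane (n+1) T) :
    ∃ m ≤ n, ∃ T' c, IsPlane m T' ∧ IsPlane (n - m) c ∧ T = addLast T' c := by
  cases T with | node a cs =>
  have hn : nodes (node a cs) = n + 2 := h.2
  have hcs : cs ≠ [] := by
    rintro rfl
    rw [nodes_node] at hn
    simp at hn
  obtain ⟨cs', c, hcc⟩ := List.eq_nil_or_concat cs |>.resolve_left hcs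
  rw [List.concat_eq_append] at hcc
  subst hcc
  have hl := (labels_zero_node a _).mp h.1
  have hnodes : nodes (node a cs') + nodes c = n + 2 := by
    rw [← nodes_addLast]
    exact hn
  have h1c := one_le_nodes c
  have h1t := one_le_nodes (node a cs')
  refine ⟨nodes (node a cs') - 1, by omega, node a cs', c, ⟨?_, ?_⟩, ⟨?_, ?_⟩, rfl⟩
  · rw [labels_zero_node]
    exact ⟨hl.1, fun d hd => hl.2 d (by rw [List.mem_append]; left; exact hd)⟩
  · show nodes (node a cs') = _
    omega
  · exact hl.2 c (by simp)
  · show nodes c = _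
    omega

lemma mem_PT : ∀ n (T : LTree), T ∈ PT n ↔ IsPlane n T := by
  intro n
  induction n using Nat.strong_induction_on with
  | _ n ih =>
  match n with
  | 0 =>
    intro T
    rw [PT, Finset.mem_singleton, isPlane_zero]
  | (n+1) =>
    intro T
    rw [PT]
    simp only [Finset.mem_biUnion, Finset.mem_attach, Finset.mem_image, Finset.mem_product,
      true_and, Subtype.exists, Finset.mem_range]
    constructor
    · rintro ⟨m, hm, ⟨T', c⟩, ⟨hT', hc⟩, rfl⟩
      have h1 := (ih m (by omega) T').mp hT'
      have h2 := (ih (n - m) (by omega) c).mp hc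
      have := isPlane_addLast h1 h2
      rwa [show m + (n - m) + 1 = n + 1 by omega] at this
    · intro h
      obtain ⟨m, hm, T', c, h1, h2, rfl⟩ := isPlane_decomp h
      exact ⟨m, by omega, ⟨T', c⟩, ⟨(ih m (by omega) T').mpr h1,
        (ih (n - m) (by omega) c).mpr h2⟩, rfl⟩

end LTree

namespace LTree
open MvPolynomial

lemma addLast_inj {T1 T2 c1 c2 : LTree} (h : addLast T1 c1 = addLast T2 c2) :
    T1 = T2 ∧ c1 = c2 := by
  cases T1 with | node a cs =>
  cases T2 with | node b ds =>
  simp only [addLast, node.injEq] at h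
  obtain ⟨rfl, h2⟩ := h
  obtain ⟨rfl, h3⟩ := List.append_inj' h2 rfl
  simp at h3
  exact ⟨rfl, h3⟩

lemma nodes_of_mem_PT {T : LTree} {n : ℕ} (h : T ∈ PT n) : nodes T = n + 1 :=
  ((mem_PT n T).mp h).2

lemma PT_zero : PT 0 = {node 0 []} := by rw [PT]

lemma isLeaf_false_of_mem {c : LTree} {j : ℕ} (h : c ∈ PT j) (hj : 1 ≤ j) :
    c.isLeaf = false := by
  cases c with | node b ds =>
  have hn := nodes_of_mem_PT h
  rw [nodes_node] at hn
  cases ds with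
  | nil => simp at hn; omega
  | cons d t => simp [isLeaf, children]

lemma exists_cons_of_mem_PT {T : LTree} {m : ℕ} (h : T ∈ PT m) (hm : 1 ≤ m) :
    ∃ a d t, T = node a (d :: t) := by
  cases T with | node a cs =>
  cases cs with
  | nil =>
    have hn := nodes_of_mem_PT h
    rw [nodes_node] at hn
    simp at hn
    omega
  | cons d t => exact ⟨a, d, t, rfl⟩

noncomputable def fP (n : ℕ) : MvPolynomial (Fin 4) ℤ := ∑ T ∈ PT n, wt T

lemma fP_succ (n : ℕ) :
    fP (n+1) = ∑ m ∈ Finset.range (n+1), ∑ p ∈ (PT m ×ˢ PT (n-m)), wt (addLast p.1 p.2) := by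
  unfold fP
  rw [PT]
  rw [Finset.sum_biUnion]
  · rw [← Finset.sum_attach (Finset.range (n+1))
      (fun m => ∑ p ∈ (PT m ×ˢ PT (n-m)), wt (addLast p.1 p.2))]
    refine Finset.sum_congr rfl fun m _ => ?_
    rw [Finset.sum_image]
    intro p hp q hq he
    obtain ⟨h1, h2⟩ := addLast_inj he
    exact Prod.ext h1 h2
  · intro x _ y _ hxy
    rw [Function.onFun, Finset.disjoint_left]
    rintro T hx hy
    simp only [Finset.mem_image, Finset.mem_product] at hx hy
    obtain ⟨p, ⟨-, hp2⟩, hpe⟩ := hx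
    obtain ⟨q, ⟨-, hq2⟩, hqe⟩ := hy
    obtain ⟨-, h22⟩ := addLast_inj (hpe.trans hqe.symm)
    have e1 := nodes_of_mem_PT hp2
    have e2 := nodes_of_mem_PT hq2
    rw [h22] at e1
    have hxr := Finset.mem_range.mp x.2
    have hyr := Finset.mem_range.mp y.2
    exact hxy (Subtype.ext (by omega))

lemma sum_leafcase (j : ℕ) :
    (∑ c ∈ PT j, (if c.isLeaf then (X 1 : MvPolynomial (Fin 4) ℤ) else wt c))
      = if j = 0 then X 1 else fP j := by
  by_cases hj : j = 0
  · subst hj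
    rw [PT_zero, Finset.sum_singleton]
    simp [isLeaf, children]
  · rw [if_neg hj]
    unfold fP
    refine Finset.sum_congr rfl fun c hc => ?_
    rw [isLeaf_false_of_mem hc (by omega)]
    simp

lemma inner_eval (m j : ℕ) : ∑ p ∈ (PT m ×ˢ PT j), wt (addLast p.1 p.2)
    = if m = 0 then (if j = 0 then X 0 * X 2 else X 3 * fP j)
      else fP m * (if j = 0 then X 1 else fP j) := by
  rw [Finset.sum_product]
  by_cases hm : m = 0
  · subst hm
    rw [if_pos rfl, PT_zero, Finset.sum_singleton]
    simp only [wt_addLast_nil]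
    by_cases hj : j = 0
    · subst hj
      rw [PT_zero, Finset.sum_singleton]
      simp [isLeaf, children, wt_leaf]
    · rw [if_neg hj]
      have hcong : ∀ c ∈ PT j,
          (if c.isLeaf then (X 0 * X 2 : MvPolynomial (Fin 4) ℤ) else X 3) * wt c
            = X 3 * wt c := by
        intro c hc
        rw [isLeaf_false_of_mem hc (by omega)]
        simp
      rw [Finset.sum_congr rfl hcong, ← Finset.mul_sum]
      rfl
  · rw [if_neg hm]
    have key : ∀ T' ∈ PT m,
        ∑ c ∈ PT j, wt (addLast T' c) = wt T' * (if j = 0 then X 1 else fP j) := by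
      intro T' hT'
      obtain ⟨a, d, t, rfl⟩ := exists_cons_of_mem_PT hT' (by omega)
      simp only [wt_addLast_cons]
      rw [← Finset.mul_sum, sum_leafcase]
    rw [Finset.sum_congr rfl key, ← Finset.sum_mul]
    rfl

lemma fP_rec (n : ℕ) (hn : 1 ≤ n) :
    fP (n+1) = (X 1 + X 3) * fP n
      + ∑ m ∈ Finset.range (n-1), fP (m+1) * fP (n-1-m) := by
  obtain ⟨q, rfl⟩ : ∃ q, n = q + 1 := ⟨n - 1, by omega⟩
  rw [fP_succ]
  rw [Finset.sum_congr rfl (fun m (_ : m ∈ Finset.range (q+1+1)) => inner_eval m (q+1-m))]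
  rw [Finset.sum_range_succ']
  rw [Finset.sum_congr rfl
    (fun m (hm : m ∈ Finset.range (q+1)) => if_neg (Nat.succ_ne_zero m))]
  rw [Finset.sum_range_succ]
  norm_num
  rw [Finset.sum_congr rfl (fun m (hm : m ∈ Finset.range q) => by
    rw [show q + 1 - (m + 1) = q - m by omega,
      if_neg (show ¬ q - m = 0 by have := Finset.mem_range.mp hm; omega)])]
  ring

end LTree


namespace LTree
open MvPolynomial Finset

lemma fP_one : fP 1 = X 0 * X 2 := by
  have h := fP_succ 0
  rw [Finset.sum_range_one] at h
  rw [h, inner_eval 0 0]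
  simp

lemma MM_one : MM 1 = vv := by
  unfold MM
  rw [Finset.sum_range_succ, Finset.sum_range_one]
  norm_num [Nat.choose_eq_zero_of_lt]

lemma fP_eq_MM : ∀ n, fP (n+1) = uu * MM n := by
  intro n
  induction n using Nat.strong_induction_on with
  | _ n ih =>
  match n with
  | 0 =>
    rw [fP_one, MM_zero]
    ring
  | 1 =>
    rw [fP_rec 1 le_rfl, MM_one, fP_one]
    simp
    ring
  | (p+2) =>
    rw [fP_rec (p+2) (by omega), ih (p+1) (by omega)]
    have hterm : ∀ m ∈ Finset.range (p+2-1),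
        fP (m+1) * fP (p+2-1-m) = uu * (uu * (MM m * MM (p - m))) := by
      intro m hm
      rw [Finset.mem_range] at hm
      rw [ih m (by omega), show p+2-1-m = (p-m)+1 by omega, ih (p-m) (by omega)]
      ring
    rw [Finset.sum_congr rfl hterm, ← Finset.mul_sum, ← Finset.mul_sum,
      show Finset.range (p+2-1) = Finset.range (p+1) by norm_num, Mrec p]
    ring

lemma final (n : ℕ) (hn : 1 ≤ n) :
    fP n = ∑ k ∈ Finset.range ((n - 1) / 2 + 1),
        (((n - 1).choose (2 * k) * catalan k : ℕ) : MvPolynomial (Fin 4) ℤ) *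
          (X 0 * X 2) ^ (k + 1) * (X 1 + X 3) ^ (n - 1 - 2 * k) := by
  obtain ⟨q, rfl⟩ : ∃ q, n = q + 1 := ⟨n - 1, by omega⟩
  rw [fP_eq_MM q]
  simp only [Nat.add_sub_cancel]
  unfold MM
  rw [Finset.mul_sum]
  rw [← Finset.sum_subset (Finset.range_subset_range.mpr (show q/2+1 ≤ q+1 by omega))
    (fun k _ hk => ?_)]
  · refine Finset.sum_congr rfl fun k _ => ?_
    ring
  · rw [Finset.mem_range, not_lt] at hk
    rw [Nat.choose_eq_zero_of_lt (show q < 2*k by omega)]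
    simp

end LTree



open MvPolynomial in
/-- **Theorem (plane trees and Motzkin polynomials).**  For `n ≥ 1`,
`Σ_{T ∈ 𝒫_n} x₁^{oleaf} x₂^{yleaf} y₁^{oint} y₂^{yint} = M_{n-1}(x₁y₁, x₂+y₂)` where
`M_m(u,v) = Σ_{k=0}^{⌊m/2⌋} C(m,2k)·Catalan(k)·u^{k+1} v^{m-2k}`.  Here `x₁ = X 0`,
`x₂ = X 1`, `y₁ = X 2`, `y₂ = X 3` in `ℤ[x₁,x₂,y₁,y₂]`. -/
theorem plane_tree_refined_narayana_eq_motzkin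
    (n : ℕ) (hn : 1 ≤ n)
    (Pn : Finset LTree) (hPn : ∀ T, T ∈ Pn ↔ LTree.IsPlane n T) :
    ∑ T ∈ Pn,
        (X 0 : MvPolynomial (Fin 4) ℤ) ^ LTree.oleaf T * X 1 ^ LTree.yleaf T *
          X 2 ^ LTree.oint T * X 3 ^ LTree.yint T
      = ∑ k ∈ Finset.range ((n - 1) / 2 + 1),
          (((n - 1).choose (2 * k) * catalan k : ℕ) : MvPolynomial (Fin 4) ℤ) *
            (X 0 * X 2) ^ (k + 1) * (X 1 + X 3) ^ (n - 1 - 2 * k) := by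
  have hPT : Pn = LTree.PT n := by
    ext T
    rw [hPn, LTree.mem_PT]
  rw [hPT]
  have hwt : ∑ T ∈ LTree.PT n, (X 0 : MvPolynomial (Fin 4) ℤ) ^ LTree.oleaf T *
      X 1 ^ LTree.yleaf T * X 2 ^ LTree.oint T * X 3 ^ LTree.yint T = LTree.fP n := rfl
  rw [hwt, LTree.final n hn]
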